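/- arXiv:2203.08592 — 4 statements merged into one kernel-verified Lean document; each statement's English description precedes it below -/
import Mathlib

section
/- Let G be a group with finite monoid generating set A and word problem L = wp_A(G). Then every nonempty word w ∈ L can be written in a unique way as a concatenation of elements of L \ {ε} that cannot themselves be factored into shorter elements of L \ {ε}; i.e., L is a free submonoid of A*. -/
/-- The word problem of `G` over the finite monoid generating set `A`. -/
def wp {A G : Type} [Group G] (f : A → G) : Set (List A) :=
  {w : List A | (w.map f).prod = 1}

/-- A word of the word problem is irreducible (a free generator) if it is nonempty
and cannot be written as a concatenation of two nonempty elements of the word problem. -/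
def Irred {A G : Type} [Group G] (f : A → G) (u : List A) : Prop :=
  u ∈ wp f ∧ u ≠ [] ∧
    ¬ ∃ v w : List A, v ∈ wp f ∧ w ∈ wp f ∧ v ≠ [] ∧ w ≠ [] ∧ u = v ++ w

lemma wp_cancel {A G : Type} [Group G] (f : A → G) {u v : List A}
    (hu : u ∈ wp f) (huv : u ++ v ∈ wp f) : v ∈ wp f := by
  simp only [wp, Set.mem_setOf_eq, List.map_append, List.prod_append] at *
  rw [hu, one_mul] at huv
  exact huv

lemma wp_append {A G : Type} [Group G] (f : A → G) {u v : List A}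
    (hu : u ∈ wp f) (hv : v ∈ wp f) : u ++ v ∈ wp f := by
  simp only [wp, Set.mem_setOf_eq, List.map_append, List.prod_append] at *
  rw [hu, hv, one_mul]

lemma exists_fact {A G : Type} [Group G] (f : A → G) :
    ∀ n (w : List A), w.length ≤ n → w ∈ wp f → w ≠ [] →
      ∃ l : List (List A), (∀ u ∈ l, Irred f u) ∧ l.flatten = w := by
  intro n
  induction n with
  | zero => intro w hlen hw hne; cases w with
    | nil => exact absurd rfl hne
    | cons a t => simp at hlen
  | succ n ih =>
    intro w hlen hw hne
    by_cases hirr : Irred f w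
    · exact ⟨[w], by simpa using hirr, by simp⟩
    · have : ∃ v t : List A, v ∈ wp f ∧ t ∈ wp f ∧ v ≠ [] ∧ t ≠ [] ∧ w = v ++ t := by
        by_contra h
        exact hirr ⟨hw, hne, h⟩
      obtain ⟨v, t, hv, ht, hvne, htne, heq⟩ := this
      have hvlen : v.length ≤ n := by
        have := congrArg List.length heq
        simp [List.length_append] at this
        have htpos : 0 < t.length := List.length_pos_iff.mpr htne
        omega
      have htlen : t.length ≤ n := by
        have := congrArg List.length heq
        simp [List.length_append] at this
        have : 0 < v.length := List.length_pos_iff.mpr hvne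
        omega
      obtain ⟨l1, hl1, hj1⟩ := ih v hvlen hv hvne
      obtain ⟨l2, hl2, hj2⟩ := ih t htlen ht htne
      refine ⟨l1 ++ l2, ?_, ?_⟩
      · intro u hu
        rcases List.mem_append.mp hu with h | h
        · exact hl1 u h
        · exact hl2 u h
      · simp only [List.flatten_append]
        rw [hj1, hj2, heq]

lemma join_wp {A G : Type} [Group G] (f : A → G) :
    ∀ l : List (List A), (∀ u ∈ l, u ∈ wp f) → l.flatten ∈ wp f := by
  intro l
  induction l with
  | nil => intro _; simp [wp]
  | cons u t ih =>
    intro h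
    simp only [List.flatten_cons]
    exact wp_append f (h u (by simp)) (ih fun v hv => h v (List.mem_cons_of_mem _ hv))

lemma uniq_fact {A G : Type} [Group G] (f : A → G) :
    ∀ l1 l2 : List (List A), (∀ u ∈ l1, Irred f u) → (∀ u ∈ l2, Irred f u) →
      l1.flatten = l2.flatten → l1 = l2 := by
  intro l1
  induction l1 with
  | nil =>
    intro l2 _ h2 hj
    cases l2 with
    | nil => rfl
    | cons v t =>
      exfalso
      have hvne := (h2 v (by simp)).2.1
      simp at hj
      exact hvne hj.1
  | cons u t ih =>
    intro l2 h1 h2 hj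
    cases l2 with
    | nil =>
      exfalso
      have hune := (h1 u (by simp)).2.1
      simp at hj
      exact hune hj.1
    | cons v s =>
      simp only [List.flatten_cons] at hj
      have hu := h1 u (by simp)
      have hv := h2 v (by simp)
      have htwp : t.flatten ∈ wp f := join_wp f t fun x hx => (h1 x (List.mem_cons_of_mem _ hx)).1
      have hswp : s.flatten ∈ wp f := join_wp f s fun x hx => (h2 x (List.mem_cons_of_mem _ hx)).1
      have huv : u = v := by
        rcases List.append_eq_append_iff.mp hj with ⟨a, ha1, ha2⟩ | ⟨c, hc1, hc2⟩
        · -- v = u ++ a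
          cases a with
          | nil => simpa using ha1.symm
          | cons x xs =>
            exfalso
            have ha : (x :: xs) ∈ wp f := wp_cancel f hu.1 (ha1 ▸ hv.1)
            exact hv.2.2 ⟨u, x :: xs, hu.1, ha, hu.2.1, by simp, ha1⟩
        · -- u = v ++ c
          cases c with
          | nil => simpa using hc1
          | cons x xs =>
            exfalso
            have hc : (x :: xs) ∈ wp f := wp_cancel f hv.1 (hc1 ▸ hu.1)
            exact hu.2.2 ⟨v, x :: xs, hv.1, hc, hv.2.1, by simp, hc1⟩
      subst huv
      have : t.flatten = s.flatten := by
        exact List.append_cancel_left hj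
      rw [ih s (fun x hx => h1 x (List.mem_cons_of_mem _ hx))
        (fun x hx => h2 x (List.mem_cons_of_mem _ hx)) this]

/-- Every nonempty word of the word problem factors uniquely as a concatenation of
irreducible elements: the word problem is a free submonoid of `A*`. -/
theorem stmt_1 {A G : Type} [Fintype A] [Group G] (f : A → G)
    (hgen : Function.Surjective fun w : List A => (w.map f).prod) :
    ∀ w ∈ wp f, w ≠ [] →
      ∃! l : List (List A), (∀ u ∈ l, Irred f u) ∧ l.flatten = w := by
  intro w hw hne
  obtain ⟨l, hl, hj⟩ := exists_fact f w.length w le_rfl hw hne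
  refine ⟨l, ⟨hl, hj⟩, ?_⟩
  intro l' ⟨hl', hj'⟩
  exact uniq_fact f l' l hl' hl (by rw [hj, hj'])
end

section
/- Let G be a group with finite monoid generating set A. The set of free generators (irreducible nonempty elements) of the word problem wp_A(G) is a bifix code: no free generator is a proper prefix of another, and no free generator is a proper suffix of another. -/
/-- The set of free generators of the word problem is a bifix code: no free generator
is a proper prefix, or a proper suffix, of another. -/
theorem stmt_2 {A G : Type} [Fintype A] [Group G] (f : A → G)
    (hgen : Function.Surjective fun w : List A => (w.map f).prod) :
    ∀ u v : List A, Irred f u → Irred f v →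
      (u <+: v → u = v) ∧ (u <:+ v → u = v) := by
  intro u v hu hv
  obtain ⟨hu1, hune, _⟩ := hu
  obtain ⟨hv1, hvne, hvirr⟩ := hv
  have hu1' : (u.map f).prod = 1 := hu1
  constructor
  · rintro ⟨w, rfl⟩
    rcases eq_or_ne w [] with rfl | hw
    · simp
    · exfalso
      apply hvirr
      refine ⟨u, w, hu1, ?_, hune, hw, rfl⟩
      have h : ((u ++ w).map f).prod = 1 := hv1
      simp only [List.map_append, List.prod_append, hu1', one_mul] at h
      exact h
  · rintro ⟨w, rfl⟩
    rcases eq_or_ne w [] with rfl | hw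
    · simp
    · exfalso
      apply hvirr
      refine ⟨w, u, ?_, hu1, hw, hune, rfl⟩
      have h : ((w ++ u).map f).prod = 1 := hv1
      simp only [List.map_append, List.prod_append, hu1', mul_one] at h
      exact h
end

section
/- Let G be a group generated (as a monoid) by a finite set A ⊆ G. If for every finite monoid generating set B of G the word problem wp_B(G) is closed under reversal, then G is commutative. -/
/-- If a finitely generated group has the property that for every finite monoid
generating set the word problem is closed under reversal, then the group is
commutative. -/
theorem stmt_9 {G : Type} [Group G] (A : Finset G)
    (hA : Submonoid.closure (A : Set G) = ⊤)
    (H : ∀ B : Finset G, Submonoid.closure (B : Set G) = ⊤ →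
      ∀ w : List G, (∀ a ∈ w, a ∈ B) → w.prod = 1 → w.reverse.prod = 1) :
    ∀ x y : G, x * y = y * x := by
  intro x y
  classical
  set B : Finset G := insert x (insert y (insert (x * y)⁻¹ A)) with hB
  have hBtop : Submonoid.closure (B : Set G) = ⊤ := by
    apply top_unique
    rw [← hA]
    apply Submonoid.closure_mono
    intro a ha
    simp [hB, ha]
  have key := H B hBtop [x, y, (x * y)⁻¹] (by
    intro a ha
    simp only [List.mem_cons, List.not_mem_nil, or_false] at ha
    rcases ha with rfl | rfl | rfl <;> simp [hB]) (by simp)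
  simp only [List.reverse_cons, List.reverse_nil, List.nil_append, List.cons_append,
    List.prod_cons, List.prod_nil, mul_one] at key
  exact inv_mul_eq_one.mp key
end

section
/- Every finitely generated non-commutative group G has a finite monoid generating set B for which the word problem wp_B(G) is not closed under reversal. -/
/-- Every finitely generated non-commutative group has a finite monoid generating
set for which the word problem is not closed under reversal. -/
theorem stmt_10 {G : Type} [Group G] (A : Finset G)
    (hA : Submonoid.closure (A : Set G) = ⊤)
    (hnc : ∃ a b : G, a * b ≠ b * a) :
    ∃ B : Finset G, Submonoid.closure (B : Set G) = ⊤ ∧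
      ∃ w : List G, (∀ a ∈ w, a ∈ B) ∧ w.prod = 1 ∧ w.reverse.prod ≠ 1 := by
  obtain ⟨a, b, hab⟩ := hnc
  classical
  refine ⟨A ∪ {a, b, (a * b)⁻¹}, ?_, [a, b, (a * b)⁻¹], ?_, ?_, ?_⟩
  · rw [eq_top_iff, ← hA]
    apply Submonoid.closure_mono
    intro x hx
    simp [hx]
  · intro x hx
    simp only [List.mem_cons, List.not_mem_nil, or_false] at hx
    rcases hx with h | h | h <;> simp [h]
  · simp [mul_assoc]
  · simp only [List.reverse_cons, List.reverse_nil, List.nil_append, List.cons_append,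
      List.prod_cons, List.prod_nil, mul_one]
    intro h
    apply hab
    have : (a * b)⁻¹ * (b * a) = 1 := by rw [← mul_assoc] at h ⊢; exact h
    rw [inv_mul_eq_one] at this
    exact this
end
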